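/- arXiv:1504.07271 — 2 statements merged into one kernel-verified Lean document; each statement's English description precedes it below -/
import Mathlib

section
/- For z, w ∈ ℂ with z ≠ 0 and w ≠ 0, the vectors exp(z ρ_n(Y)) v_0 and exp(w ρ_n(X)) v_n span the same complex line in ℂ^{n+1} if and only if w = 1/z. -/
open Finset

lemma fin_sum_single {n : ℕ} (f : Fin (n+1) → ℂ) (m : ℕ)
    (hf : ∀ l : Fin (n+1), (l:ℕ) ≠ m → f l = 0) :
    ∑ l, f l = if h : m ≤ n then f ⟨m, Nat.lt_succ_of_le h⟩ else 0 := by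
  split_ifs with h
  · exact Finset.sum_eq_single_of_mem ⟨m, Nat.lt_succ_of_le h⟩ (Finset.mem_univ _)
      (fun b _ hb => hf b (by simpa [Fin.ext_iff] using hb))
  · exact Finset.sum_eq_zero fun l _ => hf l (by have := l.isLt; omega)

lemma Ypow_col {n : ℕ} (Y : Matrix (Fin (n+1)) (Fin (n+1)) ℂ)
    (hY : ∀ i j, Y i j = if (i : ℕ) = (j : ℕ) + 1 then 1 else 0) (k : ℕ) :
    ∀ i : Fin (n+1), (Y ^ k) i 0 = if (i:ℕ) = k then 1 else 0 := by
  induction k with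
  | zero =>
    intro i
    rw [pow_zero, Matrix.one_apply]; simp only [Fin.ext_iff, Fin.val_zero]
  | succ k ih =>
    intro i
    rw [pow_succ', Matrix.mul_apply]
    rw [fin_sum_single (fun l => Y i l * (Y ^ k) l 0) k
      (fun l hl => by simp only [ih l, if_neg hl, mul_zero])]
    beta_reduce
    have hi := i.isLt
    split_ifs with h1 h2 h2
    · simp only [ih, hY]; simp [h2]
    · simp only [ih, hY]; simp [h2]
    · omega
    · rfl

lemma Ypow_zero {n : ℕ} (Y : Matrix (Fin (n+1)) (Fin (n+1)) ℂ)
    (hY : ∀ i j, Y i j = if (i : ℕ) = (j : ℕ) + 1 then 1 else 0) :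
    ∀ (k : ℕ) (i j : Fin (n+1)), (i:ℕ) < (j:ℕ) + k → (Y ^ k) i j = 0 := by
  intro k
  induction k with
  | zero => intro i j h; exact Matrix.one_apply_ne (by simp [Fin.ext_iff]; omega)
  | succ k ih =>
    intro i j h
    rw [pow_succ, Matrix.mul_apply]
    rw [fin_sum_single (fun l => (Y ^ k) i l * Y l j) ((j:ℕ)+1)
      (fun l hl => by simp only [hY, if_neg hl, mul_zero])]
    beta_reduce
    split_ifs with h1
    · rw [ih i ⟨(j:ℕ)+1, by omega⟩ (by simp; omega), zero_mul]
    · rfl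

lemma Xpow_zero {n : ℕ} (X : Matrix (Fin (n+1)) (Fin (n+1)) ℂ)
    (hX : ∀ i j, X i j = if (j : ℕ) = (i : ℕ) + 1 then
      ((j : ℕ) : ℂ) * ((n : ℂ) - ((j : ℕ) : ℂ) + 1) else 0) :
    ∀ (k : ℕ) (i j : Fin (n+1)), (j:ℕ) < (i:ℕ) + k → (X ^ k) i j = 0 := by
  intro k
  induction k with
  | zero => intro i j h; exact Matrix.one_apply_ne (by simp [Fin.ext_iff]; omega)
  | succ k ih =>
    intro i j h
    rw [pow_succ', Matrix.mul_apply]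
    rw [fin_sum_single (fun l => X i l * (X ^ k) l j) ((i:ℕ)+1)
      (fun l hl => by simp only [hX, if_neg hl, zero_mul])]
    beta_reduce
    split_ifs with h1
    · rw [ih ⟨(i:ℕ)+1, by omega⟩ j (by simp; omega), mul_zero]
    · rfl

lemma Xpow_col {n : ℕ} (X : Matrix (Fin (n+1)) (Fin (n+1)) ℂ)
    (hX : ∀ i j, X i j = if (j : ℕ) = (i : ℕ) + 1 then
      ((j : ℕ) : ℂ) * ((n : ℂ) - ((j : ℕ) : ℂ) + 1) else 0) (k : ℕ) :
    ∀ i : Fin (n+1), (X ^ k) i (Fin.last n) =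
      if (i:ℕ) + k = n then ((n.factorial : ℂ) / ((i:ℕ).factorial : ℂ)) * (k.factorial : ℂ)
      else 0 := by
  induction k with
  | zero =>
    intro i
    have hi := i.isLt
    rw [pow_zero, Matrix.one_apply]
    by_cases h : (i:ℕ) = n
    · have hil : i = Fin.last n := by ext; simpa using h
      rw [if_pos hil, if_pos (by omega), h]
      have : ((n.factorial : ℕ) : ℂ) ≠ 0 := Nat.cast_ne_zero.mpr (Nat.factorial_ne_zero _)
      field_simp
      simp
    · rw [if_neg (fun hc => h (by simpa [Fin.ext_iff] using hc)), if_neg (by omega)]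
  | succ k ih =>
    intro i
    rw [pow_succ', Matrix.mul_apply]
    rw [fin_sum_single (fun l => X i l * (X ^ k) l (Fin.last n)) ((i:ℕ)+1)
      (fun l hl => by simp only [hX, if_neg hl, zero_mul])]
    beta_reduce
    have hi := i.isLt
    split_ifs with h1 h2 h2
    · -- i+1 ≤ n and i + (k+1) = n
      rw [ih, hX]
      rw [if_pos (by simp), if_pos (by simp; omega)]
      have hn : (n:ℂ) = ((i:ℕ):ℂ) + 1 + (k:ℂ) := by
        have h' : ((i:ℕ) + 1 + k : ℕ) = n := by omega
        exact_mod_cast h'.symm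
      have hfi : (((i:ℕ).factorial : ℕ) : ℂ) ≠ 0 := Nat.cast_ne_zero.mpr (Nat.factorial_ne_zero _)
      have hi1 : ((i:ℕ):ℂ) + 1 ≠ 0 := by
        have : (((i:ℕ)+1 : ℕ):ℂ) ≠ 0 := Nat.cast_ne_zero.mpr (by omega)
        push_cast at this; exact this
      simp only [Nat.factorial_succ]
      push_cast
      rw [hn]
      field_simp
      ring
    · rw [ih, if_neg (by simp; omega), mul_zero]
    · omega
    · rfl

lemma exp_trunc {m : ℕ} (A : Matrix (Fin m) (Fin m) ℂ) (N : ℕ)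
    (hA : ∀ k, N ≤ k → A ^ k = 0) :
    NormedSpace.exp A = ∑ k ∈ Finset.range N, ((k.factorial : ℂ))⁻¹ • A ^ k := by
  rw [NormedSpace.exp_eq_tsum ℂ]
  exact tsum_eq_sum (fun k hk => by rw [hA k (by simpa using hk), smul_zero])

lemma expY_vec {n : ℕ} (z : ℂ) (Y : Matrix (Fin (n+1)) (Fin (n+1)) ℂ)
    (hY : ∀ i j, Y i j = if (i : ℕ) = (j : ℕ) + 1 then 1 else 0) (i : Fin (n+1)) :
    (NormedSpace.exp (z • Y)).mulVec (Pi.single 0 1) i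
      = (((i:ℕ).factorial : ℂ))⁻¹ * z ^ (i:ℕ) := by
  have hnil : ∀ k, n + 1 ≤ k → (z • Y) ^ k = 0 := by
    intro k hk
    rw [smul_pow]
    have : Y ^ k = 0 := by
      ext a b
      exact Ypow_zero Y hY k a b (by have := a.isLt; omega)
    rw [this, smul_zero]
  rw [exp_trunc _ _ hnil, Matrix.mulVec_single]
  simp only [MulOpposite.op_one, one_smul, Matrix.col_apply]
  rw [Matrix.sum_apply]
  have : ∀ k ∈ Finset.range (n+1),
      (((k.factorial : ℂ))⁻¹ • (z • Y) ^ k) i 0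
        = if (i:ℕ) = k then ((k.factorial : ℂ))⁻¹ * z ^ k else 0 := by
    intro k _
    rw [smul_pow, Matrix.smul_apply, Matrix.smul_apply, Ypow_col Y hY k i]
    split_ifs <;> simp [smul_eq_mul]
  rw [Finset.sum_congr rfl this, Finset.sum_ite_eq]
  rw [if_pos (Finset.mem_range.mpr i.isLt)]

lemma expX_vec {n : ℕ} (w : ℂ) (X : Matrix (Fin (n+1)) (Fin (n+1)) ℂ)
    (hX : ∀ i j, X i j = if (j : ℕ) = (i : ℕ) + 1 then
      ((j : ℕ) : ℂ) * ((n : ℂ) - ((j : ℕ) : ℂ) + 1) else 0) (i : Fin (n+1)) :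
    (NormedSpace.exp (w • X)).mulVec (Pi.single (Fin.last n) 1) i
      = w ^ (n - (i:ℕ)) * ((n.factorial : ℂ) / ((i:ℕ).factorial : ℂ)) := by
  have hnil : ∀ k, n + 1 ≤ k → (w • X) ^ k = 0 := by
    intro k hk
    rw [smul_pow]
    have : X ^ k = 0 := by
      ext a b
      exact Xpow_zero X hX k a b (by have := b.isLt; omega)
    rw [this, smul_zero]
  rw [exp_trunc _ _ hnil, Matrix.mulVec_single]
  simp only [MulOpposite.op_one, one_smul, Matrix.col_apply]
  rw [Matrix.sum_apply]
  have hi := i.isLt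
  have : ∀ k ∈ Finset.range (n+1),
      (((k.factorial : ℂ))⁻¹ • (w • X) ^ k) i (Fin.last n)
        = if k = n - (i:ℕ) then w ^ k * ((n.factorial : ℂ) / ((i:ℕ).factorial : ℂ)) else 0 := by
    intro k _
    rw [smul_pow, Matrix.smul_apply, Matrix.smul_apply, Xpow_col X hX k i]
    have hfk : ((k.factorial : ℕ) : ℂ) ≠ 0 := Nat.cast_ne_zero.mpr (Nat.factorial_ne_zero _)
    by_cases h : (i:ℕ) + k = n
    · rw [if_pos h, if_pos (by omega)]
      simp only [smul_eq_mul, div_eq_mul_inv]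
      rw [show ((k.factorial:ℂ))⁻¹ * (w ^ k * ((n.factorial:ℂ) * (((i:ℕ).factorial:ℂ))⁻¹ * (k.factorial:ℂ)))
          = (((k.factorial:ℂ))⁻¹ * (k.factorial:ℂ)) * (w ^ k * ((n.factorial:ℂ) * (((i:ℕ).factorial:ℂ))⁻¹)) from by ring,
        inv_mul_cancel₀ hfk, one_mul]
    · rw [if_neg h, if_neg (by omega)]
      simp
  rw [Finset.sum_congr rfl this, Finset.sum_ite_eq']
  rw [if_pos (Finset.mem_range.mpr (by omega))]


/-- For `z, w ≠ 0`, the vectors `exp(z Y) v₀` and `exp(w X) v_n` of the irreducible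
representation of `sl(2,ℂ)` on `ℂ^{n+1}` (`n ≥ 1`) span the same complex line
if and only if `w = 1/z`. -/
theorem stmt4 (n : ℕ) (hn : 1 ≤ n) (z w : ℂ) (hz : z ≠ 0) (hw : w ≠ 0)
    (X Y : Matrix (Fin (n + 1)) (Fin (n + 1)) ℂ)
    (hX : ∀ i j, X i j = if (j : ℕ) = (i : ℕ) + 1 then
      ((j : ℕ) : ℂ) * ((n : ℂ) - ((j : ℕ) : ℂ) + 1) else 0)
    (hY : ∀ i j, Y i j = if (i : ℕ) = (j : ℕ) + 1 then 1 else 0) :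
    Submodule.span ℂ {(NormedSpace.exp (z • Y)).mulVec (Pi.single 0 1)} =
      Submodule.span ℂ {(NormedSpace.exp (w • X)).mulVec (Pi.single (Fin.last n) 1)}
    ↔ w = 1 / z := by
  have hu := expY_vec z Y hY
  have hv := expX_vec w X hX
  have hfn : ((n.factorial : ℕ) : ℂ) ≠ 0 := Nat.cast_ne_zero.mpr (Nat.factorial_ne_zero _)
  rw [Submodule.span_singleton_eq_span_singleton]
  constructor
  · rintro ⟨c, hc⟩
    have h0 := congrFun hc (0 : Fin (n+1))
    have h1 := congrFun hc (⟨1, by omega⟩ : Fin (n+1))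
    simp only [Pi.smul_apply, Units.smul_def, smul_eq_mul, hu, hv, Fin.val_zero] at h0 h1
    simp only [Nat.factorial_zero, Nat.factorial_one, Nat.sub_zero, pow_zero, pow_one,
      Nat.cast_one, inv_one, one_mul, mul_one, div_one] at h0 h1
    have hps : w ^ n = w ^ (n-1) * w := by
      conv_lhs => rw [show n = n - 1 + 1 by omega]
      rw [pow_succ]
    rw [h0, hps] at h1
    have hwz : w * z = 1 := by
      have h2 : w ^ (n-1) * ((n.factorial : ℕ) : ℂ) * (w * z)
          = w ^ (n-1) * ((n.factorial : ℕ) : ℂ) * 1 := by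
        rw [mul_one]; linear_combination h1
      exact mul_left_cancel₀ (mul_ne_zero (pow_ne_zero _ hw) hfn) h2
    rw [eq_div_iff hz]; exact hwz
  · intro hwz
    have hzw : w * z = 1 := by rw [hwz]; field_simp
    have hcne : ((n.factorial : ℕ) : ℂ) * w ^ n ≠ 0 := mul_ne_zero hfn (pow_ne_zero _ hw)
    refine ⟨Units.mk0 _ hcne, ?_⟩
    funext i
    simp only [Pi.smul_apply, Units.smul_def, Units.val_mk0, smul_eq_mul, hu, hv]
    have hi : (i:ℕ) ≤ n := by have := i.isLt; omega
    have hsplit : w ^ n = w ^ (n - (i:ℕ)) * w ^ (i:ℕ) := by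
      rw [← pow_add]; congr 1; omega
    have hone : w ^ (i:ℕ) * z ^ (i:ℕ) = 1 := by rw [← mul_pow, hzw, one_pow]
    rw [hsplit, div_eq_mul_inv]
    calc ((n.factorial : ℕ) : ℂ) * (w ^ (n - (i:ℕ)) * w ^ (i:ℕ))
          * (((((i:ℕ).factorial : ℕ) : ℂ))⁻¹ * z ^ (i:ℕ))
        = w ^ (n-(i:ℕ)) * (((n.factorial : ℕ) : ℂ) * ((((i:ℕ).factorial : ℕ) : ℂ))⁻¹)
          * (w ^ (i:ℕ) * z ^ (i:ℕ)) := by ring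
      _ = _ := by rw [hone, mul_one]
end

section
/- For z on the unit circle S¹ ⊂ ℂ, the clutching function a(z) satisfying exp((1/z) ρ_n(X)) v_n = a(z) · exp(z ρ_n(Y)) v_0 is given by a(z) = n!/zⁿ = n! · z̄ⁿ. -/
open Finset in
/-- Powers of the raising matrix applied to the highest weight vector. -/
theorem aux_xpow (n : ℕ) (X : Matrix (Fin (n + 1)) (Fin (n + 1)) ℂ)
    (hX : ∀ i j, X i j = if (j : ℕ) = (i : ℕ) + 1 then
      ((j : ℕ) : ℂ) * ((n : ℂ) - ((j : ℕ) : ℂ) + 1) else 0) :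
    ∀ k (i : Fin (n + 1)), ((X ^ k).mulVec (Pi.single (Fin.last n) 1)) i =
      if (i : ℕ) + k = n then ((n.descFactorial k * k.factorial : ℕ) : ℂ) else 0 := by
  intro k
  induction k with
  | zero =>
    intro i
    simp only [pow_zero, Matrix.one_mulVec, Nat.add_zero]
    by_cases h : (i : ℕ) = n
    · have : i = Fin.last n := by ext; simpa using h
      rw [this]; simp
    · have : i ≠ Fin.last n := by
        intro hh; exact h (by simp [hh])
      simp [Pi.single_apply, this, h]
  | succ k ih =>
    intro i
    have hrw : (X ^ (k + 1)).mulVec (Pi.single (Fin.last n) 1)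
        = X.mulVec ((X ^ k).mulVec (Pi.single (Fin.last n) 1)) := by
      rw [Matrix.mulVec_mulVec, ← pow_succ']
    rw [hrw]
    show ∑ j, X i j * ((X ^ k).mulVec (Pi.single (Fin.last n) 1)) j = _
    by_cases hi : (i : ℕ) < n
    · set j0 : Fin (n + 1) := ⟨(i : ℕ) + 1, by omega⟩ with hj0
      rw [Finset.sum_eq_single j0]
      · rw [ih j0, hX]
        have hj0v : ((j0 : ℕ) : ℂ) = (i : ℕ) + 1 := by simp [hj0]
        by_cases hcond : (i : ℕ) + (k + 1) = n
        · have h1 : ((j0 : ℕ)) = (i : ℕ) + 1 := rfl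
          have h2 : ((j0 : ℕ)) + k = n := by simp [hj0]; omega
          rw [if_pos h1, if_pos h2, if_pos hcond]
          have hnk : n - k = (i : ℕ) + 1 := by omega
          have hk1 : k + 1 = n - (i : ℕ) := by omega
          have hnat : n.descFactorial (k+1) * (k+1).factorial
              = (((i:ℕ)+1) * (n - (i:ℕ))) * (n.descFactorial k * k.factorial) := by
            rw [Nat.descFactorial_succ, hnk, Nat.factorial_succ, hk1]; ring
          rw [hnat]
          push_cast [h1, Nat.cast_sub (show (i:ℕ) ≤ n by omega)]
          ring
        · have h2 : ¬ ((j0 : ℕ) + k = n) := by simp [hj0]; omega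
          rw [if_neg h2, if_neg hcond, mul_zero]
      · intro j _ hj
        have : ¬ ((j : ℕ) = (i : ℕ) + 1) := by
          intro hc
          exact hj (by ext; simp [hj0, hc])
        rw [hX, if_neg this, zero_mul]
      · intro h; exact absurd (Finset.mem_univ j0) h
    · have hieq : (i : ℕ) = n := by omega
      have hz : ∀ j : Fin (n+1), X i j * ((X ^ k).mulVec (Pi.single (Fin.last n) 1)) j = 0 := by
        intro j
        have : ¬ ((j : ℕ) = (i : ℕ) + 1) := by omega
        rw [hX, if_neg this, zero_mul]
      rw [Finset.sum_eq_zero (fun j _ => hz j), if_neg (by omega)]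

open Finset in
/-- Powers of the lowering matrix applied to the lowest weight vector. -/
theorem aux_ypow (n : ℕ) (Y : Matrix (Fin (n + 1)) (Fin (n + 1)) ℂ)
    (hY : ∀ i j, Y i j = if (i : ℕ) = (j : ℕ) + 1 then 1 else 0) :
    ∀ k (i : Fin (n + 1)), ((Y ^ k).mulVec (Pi.single (0 : Fin (n+1)) 1)) i =
      if (i : ℕ) = k then 1 else 0 := by
  intro k
  induction k with
  | zero =>
    intro i
    simp only [pow_zero, Matrix.one_mulVec]
    by_cases h : (i : ℕ) = 0
    · have : i = 0 := by ext; simpa using h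
      rw [this]; simp
    · have : i ≠ 0 := by intro hh; exact h (by simp [hh])
      simp [Pi.single_apply, this, h]
  | succ k ih =>
    intro i
    have hrw : (Y ^ (k + 1)).mulVec (Pi.single (0 : Fin (n+1)) 1)
        = Y.mulVec ((Y ^ k).mulVec (Pi.single (0 : Fin (n+1)) 1)) := by
      rw [Matrix.mulVec_mulVec, ← pow_succ']
    rw [hrw]
    show ∑ j, Y i j * ((Y ^ k).mulVec (Pi.single (0 : Fin (n+1)) 1)) j = _
    by_cases hk : k ≤ n
    · set j0 : Fin (n + 1) := ⟨k, by omega⟩ with hj0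
      rw [Finset.sum_eq_single j0]
      · rw [ih j0, hY]
        have h2 : ((j0 : ℕ)) = k := rfl
        rw [if_pos h2, mul_one]
      · intro j _ hj
        by_cases hc : (j : ℕ) = k
        · exact absurd (by ext; simp [hj0, hc]) hj
        · rw [ih j, if_neg hc, mul_zero]
      · intro h; exact absurd (Finset.mem_univ j0) h
    · have hz : ∀ j : Fin (n+1), Y i j * ((Y ^ k).mulVec (Pi.single (0 : Fin (n+1)) 1)) j = 0 := by
        intro j
        have : ¬ ((j : ℕ) = k) := by omega
        rw [ih j, if_neg this, mul_zero]
      rw [Finset.sum_eq_zero (fun j _ => hz j), if_neg (by omega)]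

/-- Strictly "super-diagonal" matrices are nilpotent: `X ^ (n+1) = 0`. -/
theorem aux_xnil (n : ℕ) (X : Matrix (Fin (n + 1)) (Fin (n + 1)) ℂ)
    (hX : ∀ i j, X i j = if (j : ℕ) = (i : ℕ) + 1 then
      ((j : ℕ) : ℂ) * ((n : ℂ) - ((j : ℕ) : ℂ) + 1) else 0) :
    X ^ (n + 1) = 0 := by
  have key : ∀ k (i j : Fin (n+1)), (j : ℕ) < (i : ℕ) + k → (X ^ k) i j = 0 := by
    intro k
    induction k with
    | zero =>
      intro i j h
      have : i ≠ j := by intro hh; omega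
      simp [Matrix.one_apply, this]
    | succ k ih =>
      intro i j h
      rw [pow_succ]
      show ∑ l, (X ^ k) i l * X l j = 0
      apply Finset.sum_eq_zero
      intro l _
      by_cases hl : (j : ℕ) = (l : ℕ) + 1
      · rw [ih i l (by omega), zero_mul]
      · rw [hX, if_neg hl, mul_zero]
  ext i j
  exact key (n + 1) i j (by omega)

/-- Strictly "sub-diagonal" matrices are nilpotent: `Y ^ (n+1) = 0`. -/
theorem aux_ynil (n : ℕ) (Y : Matrix (Fin (n + 1)) (Fin (n + 1)) ℂ)
    (hY : ∀ i j, Y i j = if (i : ℕ) = (j : ℕ) + 1 then 1 else 0) :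
    Y ^ (n + 1) = 0 := by
  have key : ∀ k (i j : Fin (n+1)), (i : ℕ) < (j : ℕ) + k → (Y ^ k) i j = 0 := by
    intro k
    induction k with
    | zero =>
      intro i j h
      have : i ≠ j := by intro hh; omega
      simp [Matrix.one_apply, this]
    | succ k ih =>
      intro i j h
      rw [pow_succ]
      show ∑ l, (Y ^ k) i l * Y l j = 0
      apply Finset.sum_eq_zero
      intro l _
      by_cases hl : (l : ℕ) = (j : ℕ) + 1
      · rw [ih i l (by omega), zero_mul]
      · rw [hY, if_neg hl, mul_zero]
  ext i j
  exact key (n + 1) i j (by omega)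

/-- exp of a scalar multiple of a nilpotent matrix as a finite sum. -/
theorem aux_exp_eq (n : ℕ) (c : ℂ) (M : Matrix (Fin (n + 1)) (Fin (n + 1)) ℂ)
    (hM : M ^ (n + 1) = 0) :
    NormedSpace.exp (c • M) =
      ∑ k ∈ Finset.range (n + 1), ((k.factorial : ℂ)⁻¹ * c ^ k) • M ^ k := by
  simp only [NormedSpace.exp_eq_tsum ℂ]
  rw [tsum_eq_sum (s := Finset.range (n + 1)) ?_]
  · apply Finset.sum_congr rfl
    intro k _
    rw [smul_pow, smul_smul]
  · intro k hk
    have hk' : n + 1 ≤ k := by simp only [Finset.mem_range, not_lt] at hk; exact hk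
    rw [smul_pow, pow_eq_zero_of_le hk' hM, smul_zero, smul_zero]

theorem aux_sum_mulVec {m : ℕ} (s : Finset ℕ) (f : ℕ → Matrix (Fin m) (Fin m) ℂ)
    (v : Fin m → ℂ) :
    (∑ k ∈ s, f k).mulVec v = ∑ k ∈ s, (f k).mulVec v := by
  ext i
  simp only [Matrix.mulVec, dotProduct, Finset.sum_apply, Matrix.sum_apply,
    Finset.sum_mul]
  rw [Finset.sum_comm]

/-- For `z` on the unit circle, the clutching function satisfies
`exp((1/z) X) v_n = (n!/zⁿ) • exp(z Y) v₀`, and `n!/zⁿ = n! · conj(z)ⁿ`. -/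
theorem stmt5 (n : ℕ) (hn : 1 ≤ n) (z : ℂ) (hz : ‖z‖ = 1)
    (X Y : Matrix (Fin (n + 1)) (Fin (n + 1)) ℂ)
    (hX : ∀ i j, X i j = if (j : ℕ) = (i : ℕ) + 1 then
      ((j : ℕ) : ℂ) * ((n : ℂ) - ((j : ℕ) : ℂ) + 1) else 0)
    (hY : ∀ i j, Y i j = if (i : ℕ) = (j : ℕ) + 1 then 1 else 0) :
    (NormedSpace.exp ((1 / z) • X)).mulVec (Pi.single (Fin.last n) 1) =
      ((n.factorial : ℂ) / z ^ n) • (NormedSpace.exp (z • Y)).mulVec (Pi.single 0 1)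
    ∧ (n.factorial : ℂ) / z ^ n = (n.factorial : ℂ) * (starRingEnd ℂ z) ^ n := by
  have hz0 : z ≠ 0 := by
    intro h; rw [h] at hz; simp at hz
  have hconj : (starRingEnd ℂ) z = z⁻¹ := by
    have h1 : z * (starRingEnd ℂ) z = 1 := by
      rw [Complex.mul_conj]
      norm_cast
      rw [Complex.normSq_eq_norm_sq, hz]; norm_num
    field_simp
    linear_combination h1
  constructor
  · have hXe := aux_exp_eq n (1 / z) X (aux_xnil n X hX)
    have hYe := aux_exp_eq n z Y (aux_ynil n Y hY)
    rw [hXe, hYe]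
    funext i
    have hi : (i : ℕ) ≤ n := by omega
    rw [aux_sum_mulVec, aux_sum_mulVec]
    simp only [Matrix.smul_mulVec, Finset.sum_apply, Pi.smul_apply, smul_eq_mul]
    rw [Finset.sum_eq_single_of_mem (n - (i : ℕ))
      (Finset.mem_range.mpr (by omega)) ?_]
    · rw [aux_xpow n X hX, if_pos (by omega)]
      rw [Finset.sum_eq_single_of_mem (i : ℕ) (Finset.mem_range.mpr (by omega)) ?_]
      · rw [aux_ypow n Y hY, if_pos rfl, mul_one]
        have hfac : ((i : ℕ).factorial * n.descFactorial (n - (i : ℕ)) : ℕ) = n.factorial := by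
          have := Nat.factorial_mul_descFactorial (show n - (i:ℕ) ≤ n by omega)
          rwa [show n - (n - (i:ℕ)) = (i:ℕ) by omega] at this
        have hpow : z ^ (i : ℕ) * z ^ (n - (i : ℕ)) = z ^ n := by
          rw [← pow_add]; congr 1; omega
        have hf1 : (((n - (i:ℕ)).factorial : ℂ)) ≠ 0 := by
          exact_mod_cast Nat.cast_ne_zero.mpr (Nat.factorial_ne_zero _)
        have hf2 : (((i:ℕ).factorial : ℂ)) ≠ 0 := by
          exact_mod_cast Nat.cast_ne_zero.mpr (Nat.factorial_ne_zero _)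
        have hfacC : ((i:ℕ).factorial : ℂ) * (n.descFactorial (n - (i:ℕ)) : ℂ)
            = (n.factorial : ℂ) := by exact_mod_cast congrArg (Nat.cast (R := ℂ)) hfac
        push_cast
        rw [← hfacC, ← hpow, one_div, inv_pow]
        field_simp
      · intro k _ hk
        rw [aux_ypow n Y hY, if_neg (by omega), mul_zero]
    · intro k _ hk
      rw [aux_xpow n X hX, if_neg (by omega), mul_zero]
  · rw [hconj, inv_pow, div_eq_mul_inv]
end
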